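/- (Hankel correlation identity.) Let M be a measurable space, κ a Markov kernel from M to M, μ a probability measure invariant for κ, and ν the path measure on ℕ → M of the chain started from μ. Let f : M → ℂ be bounded and measurable, let f_j := K^j f denote the j-step stochastic Koopman iterates, fix k ≥ 1, and suppose A : Matrix (Fin k) (Fin k) ℂ satisfies, for every i < k and μ-almost every x, ∫ f_i d(κ x) = Σ_j A i j · f_j (x). For each s ≥ k − 1 define the k × k matrix M_s with entries (M_s) i j = ∫ f(u(s+i)) · conj(f(u j)) dν(u), for i, j ∈ {0, …, k−1}. Then M_{s+1} = A · M_s for every s ≥ k − 1. -/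

import Mathlib

open MeasureTheory ProbabilityTheory Filter

/-- The shift map on path space: `(shift u) n = u (n+1)`. -/
def shift {M : Type*} (u : ℕ → M) : ℕ → M := fun n => u (n + 1)

/-- `ν` is the law on path space `ℕ → M` of the time-homogeneous Markov chain with
transition kernel `κ` and initial distribution `μ` (the measure produced by the
Ionescu–Tulcea theorem), characterized by its finite-dimensional distributions:
the initial law is `μ`, and the conditional law of `u (n+1)` given `(u 0, …, u n)`
is `κ (u n)`. -/
def IsPathMeasure {M : Type*} [MeasurableSpace M] (κ : Kernel M M) [IsMarkovKernel κ]
    (μ : Measure M) (ν : Measure (ℕ → M)) : Prop :=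
  IsProbabilityMeasure ν ∧
  ν.map (fun u => u 0) = μ ∧
  ∀ n : ℕ,
    ν.map (fun u => ((fun i : Fin (n + 1) => u i), u (n + 1)))
      = (ν.map (fun u => fun i : Fin (n + 1) => u i)) ⊗ₘ
        (κ.comap (fun v : Fin (n + 1) → M => v (Fin.last n)) (measurable_pi_apply _))

/-- The `s`-fold composition of the kernel `κ` with itself; integration against it
gives the `s`-step stochastic Koopman operator. -/
noncomputable def kpow {M : Type*} [MeasurableSpace M] (κ : Kernel M M) : ℕ → Kernel M M
  | 0 => Kernel.id
  | n + 1 => κ ∘ₖ kpow κ n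

section Aux

variable {M : Type*} [MeasurableSpace M]

instance kpow_markov (κ : Kernel M M) [IsMarkovKernel κ] (n : ℕ) :
    IsMarkovKernel (kpow κ n) := by
  induction n with
  | zero => rw [kpow]; infer_instance
  | succ n ih => rw [kpow]; infer_instance

lemma integrable_of_bdd {α : Type*} [MeasurableSpace α] {ρ : Measure α} [IsFiniteMeasure ρ]
    {g : α → ℂ} (hg : AEStronglyMeasurable g ρ) {C : ℝ} (hC : ∀ x, ‖g x‖ ≤ C) :
    Integrable g ρ :=
  ⟨hg, HasFiniteIntegral.of_bounded (ae_of_all _ hC)⟩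

lemma bind_eq_snd {α β : Type*} [MeasurableSpace α] [MeasurableSpace β]
    (ρ : Measure α) [SFinite ρ] (η : Kernel α β) [IsSFiniteKernel η] :
    ρ.bind η = (ρ ⊗ₘ η).map Prod.snd := by
  ext s hs
  have hpre : (Prod.snd ⁻¹' s : Set (α × β)) = Set.univ ×ˢ s := by
    ext p; simp
  rw [Measure.bind_apply hs η.measurable.aemeasurable,
    Measure.map_apply measurable_snd hs, hpre,
    Measure.compProd_apply_prod MeasurableSet.univ hs, setLIntegral_univ]

/-- Integration against a composition of Markov kernels, for bounded measurable functions. -/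
lemma integral_comp_bdd (η ξ : Kernel M M) [IsMarkovKernel η] [IsMarkovKernel ξ]
    {g : M → ℂ} (hg : Measurable g) {C : ℝ} (hC : ∀ x, ‖g x‖ ≤ C) (a : M) :
    ∫ z, g z ∂((η ∘ₖ ξ) a) = ∫ y, ∫ z, g z ∂(η y) ∂(ξ a) := by
  rw [Kernel.comp_apply, bind_eq_snd (ξ a) η,
    integral_map measurable_snd.aemeasurable hg.aestronglyMeasurable,
    Measure.integral_compProd
      (integrable_of_bdd (g := fun p : M × M => g p.2)
        (hg.comp measurable_snd).aestronglyMeasurable (fun p : M × M => hC p.2))]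

lemma kpow_comm (κ : Kernel M M) [IsMarkovKernel κ] (n : ℕ) :
    κ ∘ₖ kpow κ n = kpow κ n ∘ₖ κ := by
  induction n with
  | zero => rw [show kpow κ 0 = Kernel.id from rfl, Kernel.comp_id, Kernel.id_comp]
  | succ n ih =>
    calc κ ∘ₖ kpow κ (n + 1) = κ ∘ₖ (κ ∘ₖ kpow κ n) := rfl
      _ = κ ∘ₖ (kpow κ n ∘ₖ κ) := by rw [ih]
      _ = (κ ∘ₖ kpow κ n) ∘ₖ κ := by rw [Kernel.comp_assoc]
      _ = kpow κ (n + 1) ∘ₖ κ := rfl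

/-- The `s`-marginals of the path measure are all equal to the invariant measure. -/
lemma marginal_eq (κ : Kernel M M) [IsMarkovKernel κ] (μ : Measure M)
    (hinv : μ.bind (fun x => κ x) = μ)
    (ν : Measure (ℕ → M)) (hν : IsPathMeasure κ μ ν) :
    ∀ n : ℕ, ν.map (fun u => u n) = μ := by
  intro n
  induction n with
  | zero => exact hν.2.1
  | succ n ih =>
    haveI := hν.1
    have hπ : Measurable (fun u : ℕ → M => fun i : Fin (n + 1) => u i) :=
      measurable_pi_lambda _ fun i => measurable_pi_apply _
    have hpair : Measurable
        (fun u : ℕ → M => ((fun i : Fin (n + 1) => u i), u (n + 1))) :=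
      hπ.prodMk (measurable_pi_apply _)
    have h1 : ν.map (fun u => u (n + 1))
        = (ν.map (fun u : ℕ → M => ((fun i : Fin (n + 1) => u i), u (n + 1)))).map
            Prod.snd := by
      rw [Measure.map_map measurable_snd hpair]; rfl
    rw [h1, hν.2.2 n, ← bind_eq_snd]
    have h2 : (ν.map (fun u : ℕ → M => fun i : Fin (n + 1) => u i)).bind
          (κ.comap (fun v : Fin (n + 1) → M => v (Fin.last n)) (measurable_pi_apply _))
        = ((ν.map (fun u : ℕ → M => fun i : Fin (n + 1) => u i)).map
            (fun v : Fin (n + 1) → M => v (Fin.last n))).bind κ := by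
      ext s hs
      rw [Measure.bind_apply hs (Kernel.measurable _).aemeasurable,
        Measure.bind_apply hs κ.measurable.aemeasurable,
        lintegral_map (κ.measurable_coe hs) (measurable_pi_apply _)]
      simp_rw [Kernel.comap_apply]
    rw [h2, Measure.map_map (measurable_pi_apply _) hπ]
    have h3 : ((fun v : Fin (n + 1) → M => v (Fin.last n)) ∘
        (fun u : ℕ → M => fun i : Fin (n + 1) => u i)) = fun u => u n := by
      funext u; simp
    rw [h3, ih]
    exact hinv

/-- The core Markov-property iteration: conditioning the value of a bounded observable at
time `n + d` on the trajectory up to time `n` gives the `d`-step Koopman iterate at `u n`. -/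
lemma markov_iter (κ : Kernel M M) [IsMarkovKernel κ] (μ : Measure M)
    (ν : Measure (ℕ → M)) (hν : IsPathMeasure κ μ ν) (d : ℕ) :
    ∀ (n : ℕ) (g : M → ℂ), Measurable g → ∀ C : ℝ, (∀ x, ‖g x‖ ≤ C) →
    ∀ (φ : (Fin (n + 1) → M) → ℂ), Measurable φ → ∀ D : ℝ, (∀ v, ‖φ v‖ ≤ D) →
    ∫ u, φ (fun i : Fin (n + 1) => u i) * g (u (n + d)) ∂ν
      = ∫ u, φ (fun i : Fin (n + 1) => u i) * (∫ y, g y ∂(kpow κ d (u n))) ∂ν := by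
  haveI := hν.1
  induction d with
  | zero =>
    intro n g hg C hC φ hφ D hD
    have hzero : ∀ x : M, ∫ y, g y ∂(kpow κ 0 x) = g x := by
      intro x
      rw [show kpow κ 0 = Kernel.id from rfl, Kernel.id_apply,
        integral_dirac' _ _ hg.stronglyMeasurable]
    refine integral_congr_ae (ae_of_all _ fun u => ?_)
    simp only [Nat.add_zero, hzero]
  | succ d ih =>
    intro n g hg C hC φ hφ D hD
    set N := n + d with hN
    have hnN : n + 1 ≤ N + 1 := by omega
    have hπ : ∀ m : ℕ, Measurable (fun u : ℕ → M => fun i : Fin (m + 1) => u i) :=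
      fun m => measurable_pi_lambda _ fun i => measurable_pi_apply _
    have hpair : Measurable
        (fun u : ℕ → M => ((fun i : Fin (N + 1) => u i), u (N + 1))) :=
      (hπ N).prodMk (measurable_pi_apply _)
    set H : ((Fin (N + 1) → M) × M) → ℂ :=
      fun p => φ (fun i : Fin (n + 1) => p.1 (Fin.castLE hnN i)) * g p.2 with hH
    have htr : Measurable fun p : (Fin (N + 1) → M) × M =>
        (fun i : Fin (n + 1) => p.1 (Fin.castLE hnN i)) :=
      measurable_pi_lambda _ fun i => (measurable_pi_apply _).comp measurable_fst
    have hHmeas : Measurable H := (hφ.comp htr).mul (hg.comp measurable_snd)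
    have hHbdd : ∀ p, ‖H p‖ ≤ D * C := by
      intro p
      rw [hH, norm_mul]
      have hφp := hD (fun i : Fin (n + 1) => p.1 (Fin.castLE hnN i))
      exact mul_le_mul hφp (hC p.2) (norm_nonneg _) ((norm_nonneg _).trans hφp)
    have key1 : ∫ u, φ (fun i : Fin (n + 1) => u i) * g (u (n + (d + 1))) ∂ν
        = ∫ u, H ((fun i : Fin (N + 1) => u i), u (N + 1)) ∂ν := by
      refine integral_congr_ae (ae_of_all _ fun u => ?_)
      rw [hH]
      have harg : (fun i : Fin (n + 1) => u (Fin.castLE hnN i))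
          = fun i : Fin (n + 1) => u i := by
        funext i; rw [Fin.coe_castLE]
      simp only [harg]
      rfl
    haveI : IsProbabilityMeasure
        (ν.map (fun u : ℕ → M => fun i : Fin (N + 1) => u i)) :=
      Measure.isProbabilityMeasure_map (hπ N).aemeasurable
    have hHint : Integrable H
        ((ν.map (fun u : ℕ → M => fun i : Fin (N + 1) => u i)) ⊗ₘ
          (κ.comap (fun v : Fin (N + 1) → M => v (Fin.last N)) (measurable_pi_apply _))) :=
      integrable_of_bdd hHmeas.aestronglyMeasurable hHbdd
    have hKg : Measurable fun x => ∫ y, g y ∂(κ x) :=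
      (MeasureTheory.StronglyMeasurable.integral_kernel_prod_right' (κ := κ)
        ((hg.comp measurable_snd).stronglyMeasurable)).measurable
    have hKgb : ∀ x, ‖∫ y, g y ∂(κ x)‖ ≤ C := by
      intro x
      calc ‖∫ y, g y ∂(κ x)‖ ≤ C * ((κ x) Set.univ).toReal :=
            norm_integral_le_of_norm_le_const (ae_of_all _ hC)
        _ = C := by simp
    have key2 : ∫ u, H ((fun i : Fin (N + 1) => u i), u (N + 1)) ∂ν
        = ∫ u, φ (fun i : Fin (n + 1) => u i) * (∫ y, g y ∂(κ (u N))) ∂ν := by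
      rw [← integral_map hpair.aemeasurable hHmeas.aestronglyMeasurable, hν.2.2 N,
        Measure.integral_compProd hHint]
      simp_rw [Kernel.comap_apply, hH]
      have hinner : ∀ v : Fin (N + 1) → M,
          ∫ y, φ (fun i : Fin (n + 1) => v (Fin.castLE hnN i)) * g y ∂(κ (v (Fin.last N)))
            = φ (fun i : Fin (n + 1) => v (Fin.castLE hnN i)) *
                ∫ y, g y ∂(κ (v (Fin.last N))) := by
        intro v; exact integral_const_mul _ _
      simp_rw [hinner]
      rw [integral_map (hπ N).aemeasurable]
      · refine integral_congr_ae (ae_of_all _ fun u => ?_)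
        have harg : (fun i : Fin (n + 1) => u ((Fin.castLE hnN i : Fin (N + 1)) : ℕ))
            = fun i : Fin (n + 1) => u i := by
          funext i; rw [Fin.coe_castLE]
        simp only [harg, Fin.val_last]
      · exact ((hφ.comp (measurable_pi_lambda _ fun i =>
          measurable_pi_apply _)).mul (hKg.comp (measurable_pi_apply _))).aestronglyMeasurable
    have key3 := ih n (fun x => ∫ y, g y ∂(κ x)) hKg C hKgb φ hφ D hD
    rw [key1, key2, key3]
    refine integral_congr_ae (ae_of_all _ fun u => ?_)
    show (φ fun i : Fin (n + 1) => u (i : ℕ)) * (∫ y, ∫ z, g z ∂(κ y) ∂(kpow κ d (u n)))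
        = (φ fun i : Fin (n + 1) => u (i : ℕ)) * ∫ y, g y ∂(kpow κ (d + 1) (u n))
    congr 1
    exact (integral_comp_bdd κ (kpow κ d) hg hC (u n)).symm

end Aux

/-- Hankel correlation identity: the exact (infinite-data) Hankel Gram matrices of the
time-delayed observable satisfy `M_{s+1} = A * M_s` for `s ≥ k - 1`, where `A` is the
matrix of the stochastic Koopman operator on the Krylov span of `f`. -/
theorem stmt14 {M : Type*} [MeasurableSpace M] (κ : Kernel M M) [IsMarkovKernel κ]
    (μ : Measure M) [IsProbabilityMeasure μ]
    (hinv : μ.bind (fun x => κ x) = μ)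
    (ν : Measure (ℕ → M)) (hν : IsPathMeasure κ μ ν)
    (f : M → ℂ) (hmeas : Measurable f) (hbdd : ∃ C : ℝ, ∀ x, ‖f x‖ ≤ C)
    (fiter : ℕ → M → ℂ) (hfiter : fiter = fun j x => ∫ y, f y ∂(kpow κ j x))
    (k : ℕ) (hk : 1 ≤ k)
    (A : Matrix (Fin k) (Fin k) ℂ)
    (hA : ∀ i : Fin k, ∀ᵐ x ∂μ,
      ∫ y, fiter (i : ℕ) y ∂(κ x) = ∑ j, A i j * fiter (j : ℕ) x)
    (Mmat : ℕ → Matrix (Fin k) (Fin k) ℂ)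
    (hMmat : Mmat = fun s => Matrix.of fun i j : Fin k =>
      ∫ u, f (u (s + (i : ℕ))) * (starRingEnd ℂ) (f (u (j : ℕ))) ∂ν) :
    ∀ s : ℕ, k - 1 ≤ s → Mmat (s + 1) = A * Mmat s := by
  obtain ⟨C, hC⟩ := hbdd
  haveI := hν.1
  intro s hs
  -- basic properties of the Koopman iterates
  have hfm : ∀ j, Measurable (fiter j) := by
    intro j
    rw [hfiter]
    exact (MeasureTheory.StronglyMeasurable.integral_kernel_prod_right' (κ := kpow κ j)
      ((hmeas.comp measurable_snd).stronglyMeasurable)).measurable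
  have hfb : ∀ j x, ‖fiter j x‖ ≤ C := by
    intro j x
    rw [hfiter]
    calc ‖∫ y, f y ∂(kpow κ j x)‖ ≤ C * ((kpow κ j x) Set.univ).toReal :=
          norm_integral_le_of_norm_le_const (ae_of_all _ hC)
      _ = C := by simp
  have hsucc : ∀ j x, ∫ y, fiter j y ∂(κ x) = fiter (j + 1) x := by
    intro j x
    have hcomm : kpow κ (j + 1) = kpow κ j ∘ₖ κ := kpow_comm κ j
    have h1 : fiter (j + 1) x = ∫ y, ∫ z, f z ∂(kpow κ j y) ∂(κ x) := by
      rw [hfiter]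
      show ∫ y, f y ∂(kpow κ (j + 1) x) = _
      rw [hcomm]
      exact integral_comp_bdd (kpow κ j) κ hmeas hC x
    rw [h1]
    simp only [hfiter]
  -- the key representation of the correlation integrals
  have hj' : ∀ j : Fin k, (j : ℕ) < s + 1 := fun j => by
    have := j.isLt; omega
  have key : ∀ (d : ℕ) (j : Fin k),
      ∫ u, f (u (s + d)) * (starRingEnd ℂ) (f (u (j : ℕ))) ∂ν
        = ∫ u, (starRingEnd ℂ) (f (u (j : ℕ))) * fiter d (u s) ∂ν := by
    intro d j
    set φ : (Fin (s + 1) → M) → ℂ :=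
      fun v => (starRingEnd ℂ) (f (v ⟨(j : ℕ), hj' j⟩)) with hφ
    have hφm : Measurable φ :=
      Complex.continuous_conj.measurable.comp (hmeas.comp (measurable_pi_apply _))
    have hφb : ∀ v, ‖φ v‖ ≤ C := fun v => by
      rw [hφ]; simpa using hC _
    have h1 : ∫ u, f (u (s + d)) * (starRingEnd ℂ) (f (u (j : ℕ))) ∂ν
        = ∫ u, φ (fun i : Fin (s + 1) => u i) * f (u (s + d)) ∂ν := by
      refine integral_congr_ae (ae_of_all _ fun u => ?_)
      exact mul_comm _ _
    rw [h1, markov_iter κ μ ν hν d s f hmeas C hC φ hφm C hφb]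
    refine integral_congr_ae (ae_of_all _ fun u => ?_)
    simp only [hφ, hfiter]
  -- conclude
  have hmarg := marginal_eq κ μ hinv ν hν s
  ext i j
  rw [hMmat, Matrix.mul_apply]
  simp only [Matrix.of_apply]
  have hidx : s + 1 + (i : ℕ) = s + ((i : ℕ) + 1) := by omega
  rw [hidx, key ((i : ℕ) + 1) j]
  have hterm : ∀ l : Fin k, A i l *
      ∫ u, f (u (s + (l : ℕ))) * (starRingEnd ℂ) (f (u (j : ℕ))) ∂ν
        = ∫ u, A i l * ((starRingEnd ℂ) (f (u (j : ℕ))) * fiter (l : ℕ) (u s)) ∂ν := by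
    intro l
    rw [key (l : ℕ) j, integral_const_mul]
  simp_rw [hterm]
  have hint : ∀ l : Fin k, Integrable
      (fun u => A i l * ((starRingEnd ℂ) (f (u (j : ℕ))) * fiter (l : ℕ) (u s))) ν := by
    intro l
    refine integrable_of_bdd ?_ (C := ‖A i l‖ * (C * C)) ?_
    · exact (measurable_const.mul
        ((Complex.continuous_conj.measurable.comp
          (hmeas.comp (measurable_pi_apply _))).mul
        ((hfm _).comp (measurable_pi_apply _)))).aestronglyMeasurable
    · intro u
      rw [norm_mul, norm_mul]
      have h0C : (0 : ℝ) ≤ C := le_trans (norm_nonneg _) (hC (u (j : ℕ)))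
      refine mul_le_mul_of_nonneg_left ?_ (norm_nonneg _)
      refine mul_le_mul ?_ (hfb _ _) (norm_nonneg _) h0C
      simpa using hC _
  rw [← integral_finset_sum _ (fun l _ => hint l)]
  -- now both sides are integrals; compare integrands a.e.
  have hae : ∀ᵐ x ∂μ, fiter ((i : ℕ) + 1) x = ∑ l, A i l * fiter (l : ℕ) x := by
    filter_upwards [hA i] with x hx
    rw [← hsucc (i : ℕ) x, hx]
  have haeν : ∀ᵐ u ∂ν, fiter ((i : ℕ) + 1) (u s) = ∑ l, A i l * fiter (l : ℕ) (u s) := by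
    rw [← hmarg] at hae
    exact ae_of_ae_map (measurable_pi_apply s).aemeasurable hae
  refine integral_congr_ae ?_
  filter_upwards [haeν] with u hu
  rw [hu, Finset.mul_sum]
  refine Finset.sum_congr rfl fun l _ => ?_
  ring
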